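/- arXiv:2106.01294 — 2 statements merged into one kernel-verified Lean document; each statement's English description precedes it below -/
import Mathlib

section
/- There exist absolute constants c₁, c₂ > 0 such that for every w ∈ 𝔻 \ {0} and every z in the Carleson box S(I_w), c₁ log(e/(1−|w|²)) ≤ Re β_w(z) ≤ c₂ log(e/(1−|w|²)). -/
open Complex MeasureTheory Set Filter

noncomputable section

/-- The open unit disc in the complex plane. -/
def unitDisc : Set ℂ := Metric.ball 0 1

/-- The Möbius involution `φ_a(z) = (a - z)/(1 - conj(a) z)`. -/
def mobius (a z : ℂ) : ℂ := (a - z) / (1 - (starRingEnd ℂ) a * z)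

/-- The hyperbolic distance on the unit disc. -/
def hypDist (a z : ℂ) : ℝ :=
  (1 / 2) * Real.log ((1 + ‖mobius a z‖) / (1 - ‖mobius a z‖))

/-- The `BMOA` Garsia-type seminorm squared at the point `a`, with normalized
area measure `dm = dx dy / π`. -/
def bmoaSemi (f : ℂ → ℂ) (a : ℂ) : ℝ :=
  (Real.pi)⁻¹ * ∫ z in unitDisc, ‖deriv f z‖ ^ 2 * (1 - ‖mobius a z‖ ^ 2)

/-- `f` is an analytic function of bounded mean oscillation. -/
def IsBMOA (f : ℂ → ℂ) : Prop :=
  DifferentiableOn ℂ f unitDisc ∧ ∃ C : ℝ, ∀ a ∈ unitDisc, bmoaSemi f a ≤ C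

/-- `f` is an analytic function of vanishing mean oscillation. -/
def IsVMOA (f : ℂ → ℂ) : Prop :=
  IsBMOA f ∧ ∀ ε > 0, ∃ r < 1, ∀ a ∈ unitDisc, r < ‖a‖ → bmoaSemi f a < ε

/-- The Bloch quantity `|f'(z)| (1 - |z|²)`. -/
def blochSemi (f : ℂ → ℂ) (z : ℂ) : ℝ := ‖deriv f z‖ * (1 - ‖z‖ ^ 2)

/-- `f` belongs to the Bloch space. -/
def IsBloch (f : ℂ → ℂ) : Prop :=
  DifferentiableOn ℂ f unitDisc ∧ ∃ C : ℝ, ∀ z ∈ unitDisc, blochSemi f z ≤ C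

/-- `f` belongs to the little Bloch space. -/
def IsLittleBloch (f : ℂ → ℂ) : Prop :=
  IsBloch f ∧ ∀ ε > 0, ∃ r < 1, ∀ z ∈ unitDisc, r < ‖z‖ → blochSemi f z < ε

/-- The `BMOA` norm `|f(0)| + ‖f‖_*`. -/
def bmoaNorm (f : ℂ → ℂ) : ℝ :=
  ‖f 0‖ + Real.sqrt (⨆ a : unitDisc, bmoaSemi f (a : ℂ))

/-- The Bloch norm `|f(0)| + sup_z |f'(z)|(1-|z|²)`. -/
def blochNorm (f : ℂ → ℂ) : ℝ :=
  ‖f 0‖ + ⨆ z : unitDisc, blochSemi f (z : ℂ)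

/-- `φ` is a semigroup of holomorphic self-maps of the unit disc. -/
def IsHoloSemigroup (φ : ℝ → ℂ → ℂ) : Prop :=
  (∀ t : ℝ, 0 ≤ t → DifferentiableOn ℂ (φ t) unitDisc ∧ MapsTo (φ t) unitDisc unitDisc) ∧
  (∀ z ∈ unitDisc, φ 0 z = z) ∧
  (∀ t : ℝ, 0 ≤ t → ∀ s : ℝ, 0 ≤ s → ∀ z ∈ unitDisc, φ (t + s) z = φ t (φ s z)) ∧
  (∀ K ⊆ unitDisc, IsCompact K →
    TendstoUniformlyOn (fun t z => φ t z) id (nhdsWithin 0 (Ioi 0)) K)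

/-- The maximal subspace of strong continuity `[φ_t, BMOA]`. -/
def maxSubspaceBMOA (φ : ℝ → ℂ → ℂ) : Set (ℂ → ℂ) :=
  {f | IsBMOA f ∧
    Tendsto (fun t => bmoaNorm (fun z => f (φ t z) - f z)) (nhdsWithin 0 (Ioi 0)) (nhds 0)}

/-- The maximal subspace of strong continuity `[φ_t, 𝓑]`. -/
def maxSubspaceBloch (φ : ℝ → ℂ → ℂ) : Set (ℂ → ℂ) :=
  {f | IsBloch f ∧
    Tendsto (fun t => blochNorm (fun z => f (φ t z) - f z)) (nhdsWithin 0 (Ioi 0)) (nhds 0)}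

/-- `G` is the infinitesimal generator of the semigroup `φ`. -/
def IsGenerator (φ : ℝ → ℂ → ℂ) (G : ℂ → ℂ) : Prop :=
  DifferentiableOn ℂ G unitDisc ∧
  ∀ z ∈ unitDisc,
    Tendsto (fun t : ℝ => (φ t z - z) / (t : ℂ)) (nhdsWithin 0 (Ioi 0)) (nhds (G z))

/-- The semigroup is elliptic: its Denjoy–Wolff point lies in the disc. -/
def IsElliptic (φ : ℝ → ℂ → ℂ) : Prop :=
  ∃ τ ∈ unitDisc, ∀ t : ℝ, 0 ≤ t → φ t τ = τ

/-- The logarithmic vanishing Bloch condition (LVB) on a generator `G`. -/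
def LVB (G : ℂ → ℂ) : Prop :=
  ∀ ε > 0, ∃ r < 1, ∀ z ∈ unitDisc, r < ‖z‖ →
    (1 - ‖z‖ ^ 2) / ‖G z‖ * Real.log (1 / (1 - ‖z‖ ^ 2)) < ε

/-- The logarithmic vanishing mean oscillation condition (LVMO) on a generator `G`. -/
def LVMO (G : ℂ → ℂ) : Prop :=
  ∀ ε > 0, ∃ r < 1, ∀ a ∈ unitDisc, r < ‖a‖ →
    (Real.log (Real.exp 1 / (1 - ‖a‖ ^ 2))) ^ 2 *
      ((Real.pi)⁻¹ * ∫ z in unitDisc, (1 - ‖mobius a z‖ ^ 2) / ‖G z‖ ^ 2) < ε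

/-- `f` belongs to the logarithmic little Bloch space `𝓑_{log,0}`. -/
def InBlochLog0 (f : ℂ → ℂ) : Prop :=
  ∀ ε > 0, ∃ r < 1, ∀ z ∈ unitDisc, r < ‖z‖ →
    ‖deriv f z‖ * (1 - ‖z‖ ^ 2) * Real.log (Real.exp 1 / (1 - ‖z‖ ^ 2)) < ε

/-- `f` belongs to `VMOA_log`. -/
def InVMOAlog (f : ℂ → ℂ) : Prop :=
  ∀ ε > 0, ∃ r < 1, ∀ a ∈ unitDisc, r < ‖a‖ →
    (Real.log (Real.exp 1 / (1 - ‖a‖ ^ 2))) ^ 2 * bmoaSemi f a < ε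

/-- Hyperbolic midpoint of the segment `[0, w]`. -/
def wstar (w : ℂ) : ℂ :=
  (((1 - Real.sqrt (1 - ‖w‖ ^ 2)) / ‖w‖ ^ 2 : ℝ) : ℂ) * w

/-- The building-block function `β_w(z) = Log(e / (1 + conj(w) φ_{w*}(z)))`. -/
def betaB (w z : ℂ) : ℂ :=
  Complex.log ((Real.exp 1 : ℂ) / (1 + (starRingEnd ℂ) w * mobius (wstar w) z))

/-- The (invariant) Carleson box `S(I_u)` associated with a point `u ∈ 𝔻 \ {0}`. -/
def carlesonBox (u : ℂ) : Set ℂ :=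
  {z ∈ unitDisc | ((starRingEnd ℂ) u * mobius u z).re ≤ 0}

/-- The generalized Volterra operator `T_g f(z) = ∫₀^z f(ζ) g'(ζ) dζ`. -/
def volterra (g f : ℂ → ℂ) (z : ℂ) : ℂ :=
  z * ∫ t in (0:ℝ)..1, f ((t : ℂ) * z) * deriv g ((t : ℂ) * z)


lemma key_ineq (q x y : ℝ) (hq0 : 0 < q) (hq1 : q < 1)
    (hC : (1 - q^2) + (x^2 + y^2) ≤ (1 + (1 - q^2)) * x) :
    ((2 - q) - (1 + 1/(1+q)) * x)^2 + ((1 + 1/(1+q)) * y)^2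
      ≤ q^2 * ((1 - (1/(1+q)) * x)^2 + ((1/(1+q)) * y)^2) := by
  have h1q : (0:ℝ) < 1 + q := by linarith
  have h1q' : (1:ℝ) + q ≠ 0 := ne_of_gt h1q
  have key : q^2 * ((1 - (1/(1+q)) * x)^2 + ((1/(1+q)) * y)^2)
      - (((2 - q) - (1 + 1/(1+q)) * x)^2 + ((1 + 1/(1+q)) * y)^2)
      = (4/(1+q)) * ((1 + (1 - q^2)) * x - ((1 - q^2) + (x^2 + y^2))) := by
    field_simp
    ring
  nlinarith [key, mul_nonneg (by positivity : (0:ℝ) ≤ 4/(1+q)) (sub_nonneg.mpr hC)]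

lemma nsq1 (a b : ℝ) (u : ℂ) :
    Complex.normSq ((a:ℂ) - (b:ℂ)*u) = (a - b*u.re)^2 + (b*u.im)^2 := by
  simp only [Complex.normSq_apply, Complex.sub_re, Complex.sub_im, Complex.mul_re,
    Complex.mul_im, Complex.ofReal_re, Complex.ofReal_im]
  ring

lemma nsq2 (b : ℝ) (u : ℂ) :
    Complex.normSq (1 - (b:ℂ)*u) = (1 - b*u.re)^2 + (b*u.im)^2 := by
  simp only [Complex.normSq_apply, Complex.sub_re, Complex.sub_im, Complex.mul_re,
    Complex.mul_im, Complex.ofReal_re, Complex.ofReal_im, Complex.one_re, Complex.one_im]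
  ring

lemma normSq_one_sub_conj_mul (a z : ℂ) :
    Complex.normSq (1 - (starRingEnd ℂ) a * z) =
      Complex.normSq (a - z) + (1 - Complex.normSq a) * (1 - Complex.normSq z) := by
  simp only [Complex.normSq_apply, Complex.sub_re, Complex.sub_im, Complex.mul_re,
    Complex.mul_im, Complex.one_re, Complex.one_im, Complex.conj_re, Complex.conj_im]
  ring

lemma norm_mobius_lt_one {a z : ℂ} (ha : ‖a‖ < 1) (hz : ‖z‖ < 1) : ‖mobius a z‖ < 1 := by
  have hns : ∀ u : ℂ, Complex.normSq u = ‖u‖ ^ 2 := fun u => by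
    rw [Complex.normSq_eq_norm_sq]
  have hnsa : Complex.normSq a < 1 := by rw [hns]; nlinarith [norm_nonneg a]
  have hnsz : Complex.normSq z < 1 := by rw [hns]; nlinarith [norm_nonneg z]
  have hkey := normSq_one_sub_conj_mul a z
  have hpos : 0 < Complex.normSq (1 - (starRingEnd ℂ) a * z) := by
    nlinarith [Complex.normSq_nonneg (a - z)]
  have h1 : Complex.normSq (mobius a z) < 1 := by
    unfold mobius
    rw [map_div₀, div_lt_one hpos]
    nlinarith
  rw [hns] at h1
  nlinarith [norm_nonneg (mobius a z)]

lemma one_sub_ne_zero_of_norm_lt {u : ℂ} (h : ‖u‖ < 1) : (1 : ℂ) - u ≠ 0 := by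
  intro h0
  rw [sub_eq_zero] at h0
  rw [← h0, norm_one] at h
  exact lt_irrefl 1 h

set_option maxHeartbeats 1000000 in
/-- There are absolute constants `c₁, c₂ > 0` such that on the Carleson box
`S(I_w)` the real part of `β_w` is comparable to `log(e/(1-|w|²))`. -/
theorem betaB_re_comparable_on_carlesonBox :
    ∃ c₁ > 0, ∃ c₂ > 0, ∀ w ∈ unitDisc, w ≠ 0 → ∀ z ∈ carlesonBox w,
      c₁ * Real.log (Real.exp 1 / (1 - ‖w‖ ^ 2)) ≤ (betaB w z).re ∧
        (betaB w z).re ≤ c₂ * Real.log (Real.exp 1 / (1 - ‖w‖ ^ 2)) := by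
  refine ⟨1/2, by norm_num, 2, by norm_num, ?_⟩
  intro w hw hw0 z hz
  obtain ⟨hzD, hbox⟩ := hz
  have hns : ∀ u : ℂ, ‖u‖ ^ 2 = Complex.normSq u := fun u => by
    rw [Complex.sq_norm]
  have hw1 : ‖w‖ < 1 := by simpa [unitDisc, mem_ball_zero_iff] using hw
  have hz1 : ‖z‖ < 1 := by simpa [unitDisc, mem_ball_zero_iff] using hzD
  have hr0 : 0 < ‖w‖ := norm_pos_iff.mpr hw0
  have hR1 : 0 < 1 - ‖w‖ ^ 2 := by nlinarith
  obtain ⟨q, hqdef⟩ : ∃ q : ℝ, q = Real.sqrt (1 - ‖w‖ ^ 2) := ⟨_, rfl⟩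
  have hq0 : 0 < q := hqdef ▸ Real.sqrt_pos.mpr hR1
  have hq2 : q ^ 2 = 1 - ‖w‖ ^ 2 := hqdef ▸ Real.sq_sqrt hR1.le
  have hq1 : q < 1 := by nlinarith
  have h1q : (0:ℝ) < 1 + q := by linarith
  have hws : wstar w = ((1/(1+q) : ℝ) : ℂ) * w := by
    unfold wstar
    rw [← hqdef]
    have hsc : (1 - q) / ‖w‖ ^ 2 = 1/(1+q) := by
      rw [show ‖w‖ ^ 2 = (1-q)*(1+q) by nlinarith]
      rw [div_eq_div_iff (ne_of_gt (by nlinarith : (0:ℝ) < (1-q)*(1+q))) (ne_of_gt h1q)]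
      ring
    rw [hsc]
  have hcw : (starRingEnd ℂ) w * w = ((‖w‖ ^ 2 : ℝ) : ℂ) := by
    rw [mul_comm, Complex.mul_conj, Complex.normSq_eq_norm_sq]
  have hζ : ‖(starRingEnd ℂ) w * z‖ < 1 := by
    rw [norm_mul, RCLike.norm_conj]
    nlinarith [norm_nonneg z, norm_nonneg w]
  have hD1ne : (1:ℂ) - (starRingEnd ℂ) w * z ≠ 0 := one_sub_ne_zero_of_norm_lt hζ
  -- box condition → real inequality
  have hmw : (starRingEnd ℂ) w * mobius w z
      = (((‖w‖ ^ 2 : ℝ) : ℂ) - (starRingEnd ℂ) w * z) / (1 - (starRingEnd ℂ) w * z) := by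
    unfold mobius
    rw [← mul_div_assoc, mul_sub, hcw]
  rw [hmw, Complex.div_re, ← add_div] at hbox
  have hnsD1 : 0 < Complex.normSq (1 - (starRingEnd ℂ) w * z) := Complex.normSq_pos.mpr hD1ne
  have hC0 : (((‖w‖ ^ 2 : ℝ) : ℂ) - (starRingEnd ℂ) w * z).re * ((1:ℂ) - (starRingEnd ℂ) w * z).re
      + (((‖w‖ ^ 2 : ℝ) : ℂ) - (starRingEnd ℂ) w * z).im * ((1:ℂ) - (starRingEnd ℂ) w * z).im
      ≤ 0 := by
    rcases div_nonpos_iff.mp hbox with ⟨h, h'⟩ | ⟨h, h'⟩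
    · linarith
    · exact h
  have hC : (1 - q ^ 2) + (((starRingEnd ℂ) w * z).re ^ 2 + ((starRingEnd ℂ) w * z).im ^ 2)
      ≤ (1 + (1 - q ^ 2)) * ((starRingEnd ℂ) w * z).re := by
    simp only [Complex.sub_re, Complex.sub_im, Complex.one_re, Complex.one_im,
      Complex.ofReal_re, Complex.ofReal_im] at hC0
    nlinarith [hC0, hq2]
  -- the Möbius image
  have hcn : ‖((1/(1+q) : ℝ) : ℂ)‖ = 1/(1+q) := by
    rw [show ‖((1/(1+q) : ℝ) : ℂ)‖ = |1/(1+q)| from by rw [Complex.norm_real, Real.norm_eq_abs]]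
    exact abs_of_pos (by positivity)
  have hcle : ‖((1/(1+q) : ℝ) : ℂ)‖ ≤ 1 := by
    rw [hcn, div_le_one h1q]; linarith
  have hwsn : ‖wstar w‖ < 1 := by
    rw [hws, norm_mul]
    nlinarith [norm_nonneg w, norm_nonneg ((1/(1+q) : ℝ) : ℂ)]
  have hmn : ‖mobius (wstar w) z‖ < 1 := norm_mobius_lt_one hwsn hz1
  obtain ⟨E, hEdef⟩ : ∃ E : ℂ, E = 1 + (starRingEnd ℂ) w * mobius (wstar w) z := ⟨_, rfl⟩
  have hvle : ‖(starRingEnd ℂ) w * mobius (wstar w) z‖ ≤ ‖w‖ := by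
    rw [norm_mul, RCLike.norm_conj]
    exact mul_le_of_le_one_right (norm_nonneg w) hmn.le
  have hB1 : 1 - ‖w‖ ≤ ‖E‖ := by
    have hEv : E - (starRingEnd ℂ) w * mobius (wstar w) z = 1 := by rw [hEdef]; ring
    have h2 := norm_sub_le E ((starRingEnd ℂ) w * mobius (wstar w) z)
    rw [hEv, norm_one] at h2
    linarith
  have hBpos : 0 < ‖E‖ := by linarith
  -- representation E = num / den
  have e2 : (1:ℂ) - (starRingEnd ℂ) (wstar w) * z
      = 1 - ((1/(1+q) : ℝ) : ℂ) * ((starRingEnd ℂ) w * z) := by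
    rw [hws, map_mul, Complex.conj_ofReal, mul_assoc]
  have hD2ne : (1:ℂ) - ((1/(1+q) : ℝ) : ℂ) * ((starRingEnd ℂ) w * z) ≠ 0 := by
    apply one_sub_ne_zero_of_norm_lt
    rw [norm_mul, hcn]
    nlinarith [norm_nonneg ((starRingEnd ℂ) w * z)]
  have e1 : (starRingEnd ℂ) w * (wstar w - z)
      = ((1 - q : ℝ) : ℂ) - (starRingEnd ℂ) w * z := by
    rw [hws, mul_sub]
    congr 1
    rw [show (starRingEnd ℂ) w * (((1/(1+q) : ℝ) : ℂ) * w)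
        = ((1/(1+q) : ℝ) : ℂ) * ((starRingEnd ℂ) w * w) by ring, hcw,
      ← Complex.ofReal_mul]
    congr 1
    rw [show ‖w‖ ^ 2 = (1-q)*(1+q) by nlinarith]
    field_simp
  have hNeq : E = (((2 - q : ℝ) : ℂ) - ((1 + 1/(1+q) : ℝ) : ℂ) * ((starRingEnd ℂ) w * z))
      / (1 - ((1/(1+q) : ℝ) : ℂ) * ((starRingEnd ℂ) w * z)) := by
    rw [hEdef]
    unfold mobius
    rw [← mul_div_assoc, e1, e2, eq_div_iff hD2ne, add_mul, one_mul,
      div_mul_cancel₀ _ hD2ne]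
    push_cast
    ring
  -- key inequality
  have hkey : Complex.normSq
        (((2 - q : ℝ) : ℂ) - ((1 + 1/(1+q) : ℝ) : ℂ) * ((starRingEnd ℂ) w * z))
      ≤ q ^ 2 * Complex.normSq (1 - ((1/(1+q) : ℝ) : ℂ) * ((starRingEnd ℂ) w * z)) := by
    rw [nsq1, nsq2]
    exact key_ineq q _ _ hq0 hq1 hC
  have hB2 : ‖E‖ ^ 2 ≤ q ^ 2 := by
    rw [hNeq, norm_div, div_pow,
      div_le_iff₀ (pow_pos (norm_pos_iff.mpr hD2ne) 2),
      hns, hns]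
    exact hkey
  have hBq : ‖E‖ ≤ q := by
    have h4 : ‖E‖ = Real.sqrt (‖E‖ ^ 2) := (Real.sqrt_sq (norm_nonneg E)).symm
    rw [h4]
    calc Real.sqrt (‖E‖ ^ 2) ≤ Real.sqrt (q ^ 2) := Real.sqrt_le_sqrt hB2
    _ = q := Real.sqrt_sq hq0.le
  -- logs
  have hre : (betaB w z).re = 1 - Real.log ‖E‖ := by
    unfold betaB
    rw [show (1 + (starRingEnd ℂ) w * mobius (wstar w) z) = E from hEdef.symm,
      Complex.log_re, norm_div, Complex.norm_real, Real.norm_eq_abs,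
      abs_of_pos (Real.exp_pos 1),
      Real.log_div (Real.exp_ne_zero 1) (ne_of_gt hBpos), Real.log_exp]
  have hLeq : Real.log (Real.exp 1 / (1 - ‖w‖ ^ 2)) = 1 - Real.log (1 - ‖w‖ ^ 2) := by
    rw [Real.log_div (Real.exp_ne_zero 1) (ne_of_gt hR1), Real.log_exp]
  have hlogq : Real.log q = Real.log (1 - ‖w‖ ^ 2) / 2 := by
    rw [hqdef]; exact Real.log_sqrt hR1.le
  have hlogB_le : Real.log ‖E‖ ≤ Real.log (1 - ‖w‖ ^ 2) / 2 := by
    rw [← hlogq]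
    exact Real.log_le_log hBpos hBq
  have hB_ge : (1 - ‖w‖ ^ 2)/2 ≤ ‖E‖ := by nlinarith
  have hlogB_ge : Real.log (1 - ‖w‖ ^ 2) - Real.log 2 ≤ Real.log ‖E‖ := by
    have h3 := Real.log_le_log (by positivity) hB_ge
    rwa [Real.log_div (ne_of_gt hR1) two_ne_zero] at h3
  have hlognp : Real.log (1 - ‖w‖ ^ 2) ≤ 0 := Real.log_nonpos (by linarith) (by nlinarith)
  have hlog2 : Real.log 2 < 1 := by linarith [Real.log_two_lt_d9]
  constructor
  · rw [hre, hLeq]; linarith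
  · rw [hre, hLeq]; linarith
end
end

section
/- Let H be holomorphic on 𝔻 with inf_{z∈𝔻} |H(z)| > 0. Let F ∈ 𝓑 and suppose that the function z ↦ ∫₀^z F(ζ) H′(ζ)/H(ζ) dζ also belongs to 𝓑. Then the quotient F/H belongs to 𝓑. -/
open Complex MeasureTheory Set Filter

noncomputable section

lemma unitDisc_isOpen : IsOpen unitDisc := Metric.isOpen_ball

lemma mem_unitDisc {z : ℂ} : z ∈ unitDisc ↔ ‖z‖ < 1 := mem_ball_zero_iff

/-- Derivative of the Volterra-type primitive. -/
lemma hasDerivAt_primitive (g : ℂ → ℂ) (hg : DifferentiableOn ℂ g unitDisc)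
    {z : ℂ} (hz : z ∈ unitDisc) :
    HasDerivAt (fun w => w * ∫ t in (0:ℝ)..1, g ((t : ℂ) * w)) (g z) z := by
  have hzn : ‖z‖ < 1 := mem_unitDisc.1 hz
  have hganal : AnalyticOnNhd ℂ g unitDisc := hg.analyticOnNhd unitDisc_isOpen
  have hgderiv : ContinuousOn (deriv g) unitDisc :=
    (hganal.deriv).continuousOn
  have hgcont : ContinuousOn g unitDisc := hg.continuousOn
  set r : ℝ := (1 + ‖z‖) / 2 with hr
  have hr1 : r < 1 := by rw [hr]; linarith
  have hzr : ‖z‖ < r := by rw [hr]; linarith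
  have hr0 : 0 ≤ r := by positivity
  set ε : ℝ := r - ‖z‖ with hε
  have hε0 : 0 < ε := by rw [hε]; linarith
  -- membership facts
  have hmem : ∀ t : ℝ, ∀ x : ℂ, |t| ≤ 1 → ‖x‖ ≤ r → (t : ℂ) * x ∈ unitDisc := by
    intro t x ht hx
    rw [mem_unitDisc, norm_mul, Complex.norm_real]
    calc |t| * ‖x‖ ≤ 1 * r := by
          apply mul_le_mul ht hx (norm_nonneg x) zero_le_one
      _ < 1 := by simpa using hr1
  have hball : ∀ x ∈ Metric.ball z ε, ‖x‖ ≤ r := by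
    intro x hx
    have := mem_ball_iff_norm.1 hx
    calc ‖x‖ ≤ ‖x - z‖ + ‖z‖ := by simpa using norm_add_le (x - z) z
      _ ≤ r := by simp [hε] at this ⊢; linarith
  -- bounds on compact set
  have hK : IsCompact (Metric.closedBall (0:ℂ) r) := isCompact_closedBall _ _
  have hKsub : Metric.closedBall (0:ℂ) r ⊆ unitDisc := by
    intro x hx;
    rw [mem_unitDisc]
    have := Metric.mem_closedBall.1 hx
    rw [dist_zero_right] at this
    linarith
  obtain ⟨M₁, hM₁⟩ := hK.exists_bound_of_continuousOn (hgcont.mono hKsub)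
  obtain ⟨M₂, hM₂⟩ := hK.exists_bound_of_continuousOn (hgderiv.mono hKsub)
  have hKmem : ∀ t : ℝ, ∀ x : ℂ, |t| ≤ 1 → ‖x‖ ≤ r → (t : ℂ) * x ∈ Metric.closedBall (0:ℂ) r := by
    intro t x ht hx
    rw [Metric.mem_closedBall, dist_zero_right, norm_mul, Complex.norm_real]
    calc |t| * ‖x‖ ≤ 1 * r := mul_le_mul ht hx (norm_nonneg x) zero_le_one
      _ = r := one_mul r
  -- the function equals an integral with parameter inside
  have hfun : (fun w => w * ∫ t in (0:ℝ)..1, g ((t : ℂ) * w))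
      = fun w => ∫ t in (0:ℝ)..1, w * g ((t : ℂ) * w) := by
    funext w; rw [← intervalIntegral.integral_const_mul]
  rw [hfun]
  set F' : ℂ → ℝ → ℂ := fun x t => g ((t : ℂ) * x) + x * (deriv g ((t : ℂ) * x) * (t : ℂ)) with hF'
  -- continuity of integrand in t
  have hcont_t : ∀ x : ℂ, ‖x‖ ≤ r → ContinuousOn (fun t : ℝ => x * g ((t : ℂ) * x)) (Set.uIcc 0 1) := by
    intro x hx
    apply ContinuousOn.mul continuousOn_const
    apply hgcont.comp
    · exact (Complex.continuous_ofReal.continuousOn).mul continuousOn_const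
    · intro t ht
      apply hmem t x _ hx
      rw [Set.uIcc_of_le zero_le_one] at ht
      rw [abs_le]; exact ⟨by linarith [ht.1], ht.2⟩
  have hcont_t' : ∀ x : ℂ, ‖x‖ ≤ r → ContinuousOn (fun t : ℝ => F' x t) (Set.uIcc 0 1) := by
    intro x hx
    apply ContinuousOn.add
    · apply hgcont.comp
      · exact (Complex.continuous_ofReal.continuousOn).mul continuousOn_const
      · intro t ht
        apply hmem t x _ hx
        rw [Set.uIcc_of_le zero_le_one] at ht
        rw [abs_le]; exact ⟨by linarith [ht.1], ht.2⟩
    · apply ContinuousOn.mul continuousOn_const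
      apply ContinuousOn.mul _ (Complex.continuous_ofReal.continuousOn)
      apply hgderiv.comp
      · exact (Complex.continuous_ofReal.continuousOn).mul continuousOn_const
      · intro t ht
        apply hmem t x _ hx
        rw [Set.uIcc_of_le zero_le_one] at ht
        rw [abs_le]; exact ⟨by linarith [ht.1], ht.2⟩
  have hIsub : Set.uIoc (0:ℝ) 1 ⊆ Set.uIcc 0 1 := Set.uIoc_subset_uIcc
  have key := intervalIntegral.hasDerivAt_integral_of_dominated_loc_of_deriv_le
    (F := fun x t => x * g ((t : ℂ) * x)) (F' := F') (x₀ := z)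
    (bound := fun _ => M₁ + M₂) (μ := MeasureTheory.volume) (a := 0) (b := 1) (Metric.ball_mem_nhds z hε0)
    ?_ ?_ ?_ ?_ ?_ ?_
  · -- conclude
    obtain ⟨hint, hder⟩ := key
    -- compute the integral of F' z
    have hψ : ∀ t ∈ Set.uIcc (0:ℝ) 1,
        HasDerivAt (fun t : ℝ => (t : ℂ) * g ((t : ℂ) * z)) (F' z t) t := by
      intro t ht
      rw [Set.uIcc_of_le zero_le_one] at ht
      have htz : (t : ℂ) * z ∈ unitDisc := by
        apply hmem t z _ (le_of_lt hzr)
        rw [abs_le]; exact ⟨by linarith [ht.1], ht.2⟩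
      have hgd : HasDerivAt g (deriv g ((t:ℂ) * z)) ((t:ℂ) * z) :=
        ((hg.differentiableAt (unitDisc_isOpen.mem_nhds htz)).hasDerivAt)
      have hφ : HasDerivAt (fun w : ℂ => w * g (w * z))
          (1 * g ((t:ℂ) * z) + (t:ℂ) * (deriv g ((t:ℂ)*z) * z)) (t : ℂ) := by
        apply HasDerivAt.mul (hasDerivAt_id _)
        have hin : HasDerivAt (fun w : ℂ => w * z) z (t : ℂ) := by
          simpa using (hasDerivAt_id ((t:ℂ))).mul_const z
        exact HasDerivAt.comp ((t:ℂ)) hgd hin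
      have := hφ.comp_ofReal
      convert this using 1
      simp [hF']; ring
    have hFTC : ∫ t in (0:ℝ)..1, F' z t = g z := by
      rw [intervalIntegral.integral_eq_sub_of_hasDerivAt hψ]
      · simp
      · exact (hcont_t' z (le_of_lt hzr)).intervalIntegrable
    rwa [hFTC] at hder
  · -- hF_meas
    filter_upwards [Metric.ball_mem_nhds z hε0] with x hx
    exact ((hcont_t x (hball x hx)).mono hIsub).aestronglyMeasurable measurableSet_uIoc
  · -- hF_int
    exact (hcont_t z (le_of_lt hzr)).intervalIntegrable
  · -- hF'_meas
    exact ((hcont_t' z (le_of_lt hzr)).mono hIsub).aestronglyMeasurable measurableSet_uIoc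
  · -- h_bound
    apply Filter.Eventually.of_forall
    intro t ht x hx
    have ht' : |t| ≤ 1 := by
      rw [Set.uIoc_of_le zero_le_one] at ht
      rw [abs_le]; exact ⟨by linarith [ht.1], ht.2⟩
    have hxr := hball x hx
    have h1 : (t:ℂ) * x ∈ Metric.closedBall (0:ℂ) r := hKmem t x ht' hxr
    have hb1 := hM₁ _ h1
    have hb2 := hM₂ _ h1
    calc ‖F' x t‖ ≤ ‖g ((t:ℂ)*x)‖ + ‖x * (deriv g ((t:ℂ)*x) * (t:ℂ))‖ := norm_add_le _ _
      _ ≤ M₁ + M₂ := by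
          gcongr
          rw [norm_mul, norm_mul, Complex.norm_real]
          calc ‖x‖ * (‖deriv g ((t:ℂ)*x)‖ * |t|) ≤ 1 * (M₂ * 1) := by
                apply mul_le_mul (le_trans hxr (le_of_lt hr1))
                  (mul_le_mul hb2 ht' (abs_nonneg t) ((norm_nonneg _).trans hb2))
                  (by positivity) zero_le_one
            _ = M₂ := by ring
  · exact intervalIntegrable_const
  · -- h_diff
    apply Filter.Eventually.of_forall
    intro t ht x hx
    have hxr := hball x hx
    have ht' : |t| ≤ 1 := by
      rw [Set.uIoc_of_le zero_le_one] at ht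
      rw [abs_le]; exact ⟨by linarith [ht.1], ht.2⟩
    have htx : (t : ℂ) * x ∈ unitDisc := hmem t x ht' hxr
    have hgd : HasDerivAt g (deriv g ((t:ℂ) * x)) ((t:ℂ) * x) :=
      (hg.differentiableAt (unitDisc_isOpen.mem_nhds htx)).hasDerivAt
    have hin : HasDerivAt (fun y : ℂ => (t:ℂ) * y) (t : ℂ) x := by
      simpa using (hasDerivAt_id x).const_mul (t : ℂ)
    have hcomp : HasDerivAt (fun y : ℂ => g ((t:ℂ) * y)) (deriv g ((t:ℂ)*x) * (t:ℂ)) x :=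
      hgd.comp _ hin
    have := (hasDerivAt_id' x).fun_mul hcomp
    simpa [hF'] using this


/-- If `H` is holomorphic with `inf_𝔻 |H| > 0`, `F` is a Bloch function and
`z ↦ ∫₀^z F(ζ) H'(ζ)/H(ζ) dζ` is a Bloch function, then `F/H` is a Bloch function. -/
theorem quotient_isBloch
    (H F : ℂ → ℂ) (hH : DifferentiableOn ℂ H unitDisc)
    (hinf : ∃ c > 0, ∀ z ∈ unitDisc, c ≤ ‖H z‖)
    (hF : IsBloch F)
    (hT : IsBloch (fun z =>
      z * ∫ t in (0:ℝ)..1, F ((t : ℂ) * z) * (deriv H ((t : ℂ) * z) / H ((t : ℂ) * z)))) :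
    IsBloch (fun z => F z / H z) := by
  obtain ⟨c, hc0, hc⟩ := hinf
  have hHne : ∀ z ∈ unitDisc, H z ≠ 0 := by
    intro z hz hzero
    have := hc z hz
    rw [hzero, norm_zero] at this
    linarith
  set g : ℂ → ℂ := fun ζ => F ζ * (deriv H ζ / H ζ) with hgdef
  have hHanal : AnalyticOnNhd ℂ H unitDisc := hH.analyticOnNhd unitDisc_isOpen
  have hg : DifferentiableOn ℂ g unitDisc := by
    apply DifferentiableOn.mul hF.1
    exact (hHanal.deriv.differentiableOn).div hH hHne
  obtain ⟨CF, hCF⟩ := hF.2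
  obtain ⟨CT, hCT⟩ := hT.2
  constructor
  · exact hF.1.div hH hHne
  · refine ⟨(CF + CT) / c, fun z hz => ?_⟩
    have hzn : ‖z‖ < 1 := mem_unitDisc.1 hz
    have h1z : (0:ℝ) ≤ 1 - ‖z‖ ^ 2 := by nlinarith [norm_nonneg z]
    -- deriv of T
    have hTder : deriv (fun w => w * ∫ t in (0:ℝ)..1,
        F ((t : ℂ) * w) * (deriv H ((t : ℂ) * w) / H ((t : ℂ) * w))) z = g z :=
      (hasDerivAt_primitive g hg hz).deriv
    -- deriv of F/H
    have hFd : HasDerivAt F (deriv F z) z :=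
      (hF.1.differentiableAt (unitDisc_isOpen.mem_nhds hz)).hasDerivAt
    have hHd : HasDerivAt H (deriv H z) z :=
      (hH.differentiableAt (unitDisc_isOpen.mem_nhds hz)).hasDerivAt
    have hdiv : HasDerivAt (fun z => F z / H z)
        ((deriv F z * H z - F z * deriv H z) / H z ^ 2) z :=
      hFd.div hHd (hHne z hz)
    have heq : (deriv F z * H z - F z * deriv H z) / H z ^ 2
        = (deriv F z - g z) / H z := by
      have h0 := hHne z hz
      rw [hgdef]
      field_simp
    have hderFH : deriv (fun z => F z / H z) z = (deriv F z - g z) / H z := by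
      rw [hdiv.deriv, heq]
    have hFb := hCF z hz
    have hTb := hCT z hz
    unfold blochSemi at hFb hTb ⊢
    rw [hTder] at hTb
    rw [hderFH]
    have hHz : c ≤ ‖H z‖ := hc z hz
    rw [norm_div]
    have hnum : ‖deriv F z - g z‖ * (1 - ‖z‖ ^ 2) ≤ CF + CT := by
      calc ‖deriv F z - g z‖ * (1 - ‖z‖ ^ 2)
          ≤ (‖deriv F z‖ + ‖g z‖) * (1 - ‖z‖ ^ 2) := by
            apply mul_le_mul_of_nonneg_right (norm_sub_le _ _) h1z
        _ = ‖deriv F z‖ * (1 - ‖z‖ ^ 2) + ‖g z‖ * (1 - ‖z‖ ^ 2) := by ring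
        _ ≤ CF + CT := add_le_add hFb hTb
    rw [div_mul_eq_mul_div, div_le_div_iff₀ (lt_of_lt_of_le hc0 hHz) hc0]
    calc ‖deriv F z - g z‖ * (1 - ‖z‖ ^ 2) * c ≤ (CF + CT) * c :=
          mul_le_mul_of_nonneg_right hnum (le_of_lt hc0)
      _ ≤ (CF + CT) * ‖H z‖ := by
          apply mul_le_mul_of_nonneg_left hHz
          have : 0 ≤ ‖deriv F z - g z‖ * (1 - ‖z‖ ^ 2) := by positivity
          linarith
end
end
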